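/- Define synaptic weights W : ℕ × ℕ → ℝ (indices i, j ≥ 1, i ≠ j) by W_{ij} = −2 if |i − j| = 1, W_{ij} = 1 if |i − j| is even, and W_{ij} = −1 if |i − j| is odd and ≥ 3. Then: (1) for every i ≥ 1 and every k ≥ 1, ∑_{j : 0 < |j−i| ≤ k} max(−W_{ij}, 0) ≥ ∑_{j : 0 < |j−i| ≤ k} max(W_{ij}, 0), so condition (D) (infinite-range interactions with negative weights dominating at every finite range) holds; (2) for every i ≥ 1, |W_{ji}| ≥ 1 for all j ≠ i, hence the series ∑_{j≠i} |W_{ji}| diverges, so the Dobrushin condition fails. -/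
import Mathlib


/- STATEMENT 15: Example 5 of the paper: the weights W_{ij} = −2 if |i−j| = 1,
W_{ij} = 1 if |i−j| is even (and positive), W_{ij} = −1 if |i−j| is odd and ≥ 3,
satisfy condition (D) (negative weights dominate at every finite interaction range)
but every neuron receives from every other neuron a weight of absolute value ≥ 1,
so the Dobrushin condition fails (the incoming series diverges). -/
theorem example5_condition_D_not_Dobrushin
    (W : ℕ → ℕ → ℝ)
    (hW : ∀ i j, i ≠ j → W i j =
      if Nat.dist i j = 1 then -2
      else if Nat.dist i j % 2 = 0 then 1 else -1) :
    (∀ i : ℕ, 1 ≤ i → ∀ k : ℕ, 1 ≤ k →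
      (∑' j : {j : ℕ // j ≠ i ∧ Nat.dist j i ≤ k}, max (W i j.1) 0) ≤
      (∑' j : {j : ℕ // j ≠ i ∧ Nat.dist j i ≤ k}, max (-(W i j.1)) 0)) ∧
    (∀ i : ℕ, 1 ≤ i → ∀ j : ℕ, j ≠ i → 1 ≤ |W j i|) ∧
    (∀ i : ℕ, 1 ≤ i → ¬ Summable (fun j : {j : ℕ // j ≠ i} => |W j.1 i|)) := by
  have habs : ∀ i : ℕ, ∀ j : ℕ, j ≠ i → 1 ≤ |W j i| := by
    intro i j hj
    rw [hW j i hj]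
    split_ifs <;> norm_num
  refine ⟨?_, fun i _ j hj => habs i j hj, ?_⟩
  · intro i hi k hk
    classical
    set t : Finset ℕ := (Finset.range (i+k+1)).filter
        (fun j => j ≠ i ∧ Nat.dist j i ≤ k) with ht
    have hmem : ∀ j : ℕ, (j ≠ i ∧ Nat.dist j i ≤ k) ↔ j ∈ t := by
      intro j
      simp only [ht, Finset.mem_filter, Finset.mem_range]
      constructor
      · rintro ⟨h1, h2⟩
        refine ⟨?_, h1, h2⟩
        simp only [Nat.dist] at h2
        omega
      · rintro ⟨_, h1, h2⟩; exact ⟨h1, h2⟩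
    have hL : (∑' j : {j : ℕ // j ≠ i ∧ Nat.dist j i ≤ k}, max (W i j.1) 0)
        = ∑ j ∈ t, max (W i j) 0 := by
      rw [← Finset.tsum_subtype t (fun j => max (W i j) 0)]
      simpa [Equiv.subtypeEquivRight_apply] using
        (Equiv.subtypeEquivRight hmem).tsum_eq (fun j : {j // j ∈ t} => max (W i j.1) 0)
    have hR : (∑' j : {j : ℕ // j ≠ i ∧ Nat.dist j i ≤ k}, max (-(W i j.1)) 0)
        = ∑ j ∈ t, max (-(W i j)) 0 := by
      rw [← Finset.tsum_subtype t (fun j => max (-(W i j)) 0)]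
      simpa [Equiv.subtypeEquivRight_apply] using
        (Equiv.subtypeEquivRight hmem).tsum_eq (fun j : {j // j ∈ t} => max (-(W i j.1)) 0)
    rw [hL, hR]
    have hval : ∀ j ∈ t, W i j =
        (if Nat.dist j i = 1 then -2 else if Nat.dist j i % 2 = 0 then 1 else -1) := by
      intro j hj
      have hji : j ≠ i := ((hmem j).mpr hj).1
      rw [hW i j (Ne.symm hji), Nat.dist_comm]
    -- restrict LHS to even-distance indices
    set s : Finset ℕ := t.filter (fun j => Nat.dist j i % 2 = 0) with hs
    have hLs : ∑ j ∈ t, max (W i j) 0 = ∑ j ∈ s, max (W i j) 0 := by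
      rw [hs]
      refine (Finset.sum_filter_of_ne ?_).symm
      intro j hj hne
      by_contra hodd
      apply hne
      rw [hval j hj]
      split_ifs with h1 <;> norm_num
    rw [hLs]
    -- the pairing map
    set φ : ℕ → ℕ := fun j => if j < i then j + 1 else j - 1 with hφ
    have hdists : ∀ j ∈ s, j ≠ i ∧ Nat.dist j i ≤ k ∧ Nat.dist j i % 2 = 0 := by
      intro j hj
      rw [hs] at hj
      obtain ⟨hjt, hev⟩ := Finset.mem_filter.mp hj
      exact ⟨((hmem j).mpr hjt).1, ((hmem j).mpr hjt).2, hev⟩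
    have hd2 : ∀ j ∈ s, 2 ≤ Nat.dist j i := by
      intro j hj
      obtain ⟨h1, _, h3⟩ := hdists j hj
      have : Nat.dist j i ≠ 0 := fun h => h1 (Nat.eq_of_dist_eq_zero h)
      omega
    have hφdist : ∀ j ∈ s, Nat.dist (φ j) i = Nat.dist j i - 1 := by
      intro j hj
      have h2 := hd2 j hj
      simp only [Nat.dist, hφ] at *
      split_ifs <;> omega
    have hφmem : ∀ j ∈ s, φ j ∈ t := by
      intro j hj
      obtain ⟨h1, h2, _⟩ := hdists j hj
      have h2' := hd2 j hj
      have hd := hφdist j hj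
      refine (hmem (φ j)).mp ⟨?_, ?_⟩
      · intro h
        rw [h] at hd
        simp at hd
        omega
      · omega
    have hφinj : Set.InjOn φ s := by
      intro a ha b hb hab
      have h2a := hd2 a ha
      have h2b := hd2 b hb
      simp only [Nat.dist] at h2a h2b
      simp only [hφ] at hab
      split_ifs at hab <;> omega
    have hφodd : ∀ j ∈ s, Nat.dist (φ j) i % 2 = 1 := by
      intro j hj
      have := hφdist j hj
      have := (hdists j hj).2.2
      have := hd2 j hj
      omega
    -- termwise bound
    have hbound : ∀ j ∈ s, max (W i j) 0 ≤ max (-(W i (φ j))) 0 := by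
      intro j hj
      obtain ⟨h1, h2, h3⟩ := hdists j hj
      have h2' := hd2 j hj
      have hWj : W i j = 1 := by
        rw [hval j (Finset.mem_filter.mp (hs ▸ hj)).1, if_neg (by omega), if_pos h3]
      have hWφ : max (-(W i (φ j))) 0 ≥ 1 := by
        have hodd := hφodd j hj
        rw [hval (φ j) (hφmem j hj)]
        by_cases hone : Nat.dist (φ j) i = 1
        · rw [if_pos hone]; norm_num
        · rw [if_neg hone, if_neg (by omega)]; norm_num
      rw [hWj]
      simp only [max_eq_left (by norm_num : (0:ℝ) ≤ 1)] at *
      linarith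
    calc ∑ j ∈ s, max (W i j) 0 ≤ ∑ j ∈ s, max (-(W i (φ j))) 0 :=
          Finset.sum_le_sum hbound
      _ = ∑ j ∈ s.image φ, max (-(W i j)) 0 :=
          (Finset.sum_image (f := fun j => max (-(W i j)) 0) (g := φ)
            (fun a ha b hb h => hφinj ha hb h)).symm
      _ ≤ ∑ j ∈ t, max (-(W i j)) 0 := by
          apply Finset.sum_le_sum_of_subset_of_nonneg
          · intro x hx
            obtain ⟨a, ha, rfl⟩ := Finset.mem_image.mp hx
            exact hφmem a ha
          · intro x _ _; exact le_max_right _ 0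
  · intro i hi h
    haveI : Infinite {j : ℕ // j ≠ i} :=
      Set.infinite_coe_iff.mpr ((Set.finite_singleton i).infinite_compl)
    have h1 : Summable (fun _ : {j : ℕ // j ≠ i} => (1:ℝ)) :=
      Summable.of_nonneg_of_le (fun _ => zero_le_one)
        (fun j => habs i j.1 j.2) h
    exact one_ne_zero ((summable_const_iff (1:ℝ)).mp h1)
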